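/- Let γ ∈ (1, ∞) and define f : (0, ∞) → ℝ by f(x) = 1/x − γ ∫ r/(x·r + 1) dP(r). Then: (i) there exists a unique x₀ ∈ (0, ∞) with f(x₀) = 0; (ii) f is strictly decreasing on (0, x₀]; and (iii) f(x) → +∞ as x → 0⁺. -/

import Mathlib

open Filter MeasureTheory

section RfpHelpers

variable {a b : ℝ} {P : Measure ℝ} [IsProbabilityMeasure P]

lemma rfp_meas (x : ℝ) : Measurable fun r : ℝ => 1 / (x * r + 1) :=
  measurable_const.div ((measurable_id.const_mul x).add_const 1)

lemma rfp_meas_r (x : ℝ) : Measurable fun r : ℝ => r / (x * r + 1) :=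
  measurable_id.div ((measurable_id.const_mul x).add_const 1)

lemma rfp_int_one (ha : 0 < a) (hsupp : ∀ᵐ r ∂P, r ∈ Set.Icc a b)
    {x : ℝ} (hx : 0 ≤ x) : Integrable (fun r => 1 / (x * r + 1)) P := by
  refine (integrable_const (1:ℝ)).mono' (rfp_meas x).aestronglyMeasurable ?_
  filter_upwards [hsupp] with r hr
  have h1 : 1 ≤ x * r + 1 := by nlinarith [hr.1, hr.2]
  rw [Real.norm_eq_abs, abs_of_nonneg (by positivity)]
  rw [div_le_one (by linarith)]; linarith

lemma rfp_int_r (ha : 0 < a) (hsupp : ∀ᵐ r ∂P, r ∈ Set.Icc a b)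
    {x : ℝ} (hx : 0 ≤ x) : Integrable (fun r => r / (x * r + 1)) P := by
  refine (integrable_const b).mono' (rfp_meas_r x).aestronglyMeasurable ?_
  filter_upwards [hsupp] with r hr
  have h1 : 1 ≤ x * r + 1 := by nlinarith [hr.1, hr.2]
  have hr0 : 0 < r := lt_of_lt_of_le ha hr.1
  rw [Real.norm_eq_abs, abs_of_nonneg (by positivity)]
  rw [div_le_iff₀ (by linarith)]; nlinarith [hr.2]

lemma rfp_I_lb (ha : 0 < a) (hab : a ≤ b) (hsupp : ∀ᵐ r ∂P, r ∈ Set.Icc a b)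
    {x : ℝ} (hx : 0 ≤ x) : 1 / (x * b + 1) ≤ ∫ r, 1 / (x * r + 1) ∂P := by
  have hb : 0 < b := lt_of_lt_of_le ha hab
  have := integral_mono_ae (integrable_const (1 / (x * b + 1)))
    (rfp_int_one ha hsupp hx) ?_
  · simpa using this
  · filter_upwards [hsupp] with r hr
    have hd : 0 < x * r + 1 := by nlinarith [hr.1]
    have hd' : 0 < x * b + 1 := by positivity
    apply div_le_div_of_nonneg_left one_pos.le hd
    nlinarith [hr.2]

lemma rfp_I_ub (ha : 0 < a) (hsupp : ∀ᵐ r ∂P, r ∈ Set.Icc a b)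
    {x : ℝ} (hx : 0 ≤ x) : (∫ r, 1 / (x * r + 1) ∂P) ≤ 1 / (x * a + 1) := by
  have := integral_mono_ae (rfp_int_one ha hsupp hx)
    (integrable_const (1 / (x * a + 1))) ?_
  · simpa using this
  · filter_upwards [hsupp] with r hr
    have hd : 0 < x * a + 1 := by positivity
    apply div_le_div_of_nonneg_left one_pos.le hd
    nlinarith [hr.1]

lemma rfp_J_ub (ha : 0 < a) (hsupp : ∀ᵐ r ∂P, r ∈ Set.Icc a b)
    {x : ℝ} (hx : 0 ≤ x) : (∫ r, r / (x * r + 1) ∂P) ≤ b := by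
  have := integral_mono_ae (rfp_int_r ha hsupp hx) (integrable_const b) ?_
  · simpa using this
  · filter_upwards [hsupp] with r hr
    have h1 : (1:ℝ) ≤ x * r + 1 := by nlinarith [hr.1, hr.2]
    rw [div_le_iff₀ (by linarith)]
    nlinarith [hr.2, hr.1]

lemma rfp_I_strict (ha : 0 < a) (hab : a ≤ b) (hsupp : ∀ᵐ r ∂P, r ∈ Set.Icc a b)
    {x y : ℝ} (hx : 0 ≤ x) (hxy : x < y) :
    (∫ r, 1 / (y * r + 1) ∂P) < ∫ r, 1 / (x * r + 1) ∂P := by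
  have hb : 0 < b := lt_of_lt_of_le ha hab
  have hy : 0 ≤ y := le_of_lt (lt_of_le_of_lt hx hxy)
  set c : ℝ := (y - x) * a / ((x * b + 1) * (y * b + 1)) with hc
  have hcpos : 0 < c := by
    apply div_pos (by nlinarith) (by positivity)
  have key : c ≤ (∫ r, 1 / (x * r + 1) ∂P) - ∫ r, 1 / (y * r + 1) ∂P := by
    rw [← integral_sub (rfp_int_one ha hsupp hx) (rfp_int_one ha hsupp hy)]
    have := integral_mono_ae (integrable_const c)
      ((rfp_int_one ha hsupp hx).sub (rfp_int_one ha hsupp hy)) ?_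
    · simpa using this
    · filter_upwards [hsupp] with r hr
      have hr1 := hr.1; have hr2 := hr.2
      have hdx : 0 < x * r + 1 := by nlinarith
      have hdy : 0 < y * r + 1 := by nlinarith
      have hDx : 0 < x * b + 1 := by positivity
      have hDy : 0 < y * b + 1 := by positivity
      have heq : 1 / (x * r + 1) - 1 / (y * r + 1)
          = (y - x) * r / ((x * r + 1) * (y * r + 1)) := by
        rw [div_sub_div _ _ hdx.ne' hdy.ne']; ring
      simp only [Pi.sub_apply]
      rw [heq, hc, div_le_div_iff₀ (by positivity) (by positivity)]
      have h1 : (x * r + 1) * (y * r + 1) ≤ (x * b + 1) * (y * b + 1) := by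
        nlinarith [mul_nonneg hx (sub_nonneg.mpr hr2), mul_nonneg hy (sub_nonneg.mpr hr2),
          mul_nonneg (mul_nonneg hx hy) (mul_nonneg (sub_nonneg.mpr hr2)
            (by linarith : (0:ℝ) ≤ b + r))]
      nlinarith [mul_le_mul_of_nonneg_left h1 (by nlinarith : (0:ℝ) ≤ (y - x) * a),
        mul_le_mul_of_nonneg_right (by nlinarith : (y - x) * a ≤ (y - x) * r)
          (mul_pos hDx hDy).le]
  linarith

lemma rfp_I_lip (ha : 0 < a) (hab : a ≤ b) (hsupp : ∀ᵐ r ∂P, r ∈ Set.Icc a b)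
    {x y : ℝ} (hx : 0 ≤ x) (hy : 0 ≤ y) :
    |(∫ r, 1 / (x * r + 1) ∂P) - ∫ r, 1 / (y * r + 1) ∂P| ≤ b * |x - y| := by
  have hb : 0 < b := lt_of_lt_of_le ha hab
  rw [← integral_sub (rfp_int_one ha hsupp hx) (rfp_int_one ha hsupp hy)]
  have := norm_integral_le_of_norm_le_const (C := b * |x - y|) (μ := P)
    (f := fun r => 1 / (x * r + 1) - 1 / (y * r + 1)) ?_
  · simpa [Real.norm_eq_abs] using this
  · filter_upwards [hsupp] with r hr
    have hr1 := hr.1; have hr2 := hr.2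
    have hdx : (1:ℝ) ≤ x * r + 1 := by nlinarith
    have hdy : (1:ℝ) ≤ y * r + 1 := by nlinarith
    have heq : 1 / (x * r + 1) - 1 / (y * r + 1)
        = (y - x) * r / ((x * r + 1) * (y * r + 1)) := by
      rw [div_sub_div _ _ (ne_of_gt (by linarith)) (ne_of_gt (by linarith))]; ring
    rw [Real.norm_eq_abs, heq, abs_div]
    rw [div_le_iff₀ (by positivity)]
    have h1 : |(y - x) * r| = |y - x| * r := by
      rw [abs_mul, abs_of_nonneg (by linarith : (0:ℝ) ≤ r)]
    have h2 : (1:ℝ) ≤ |(x * r + 1) * (y * r + 1)| := by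
      rw [abs_of_nonneg (by nlinarith)]; nlinarith
    have h3 : |y - x| = |x - y| := abs_sub_comm y x
    calc |(y - x) * r| = |x - y| * r := by rw [h1, h3]
      _ ≤ |x - y| * b := mul_le_mul_of_nonneg_left hr2 (abs_nonneg _)
      _ = b * |x - y| * 1 := by ring
      _ ≤ b * |x - y| * |(x * r + 1) * (y * r + 1)| :=
          mul_le_mul_of_nonneg_left h2 (by positivity)

lemma rfp_xf (ha : 0 < a) (hsupp : ∀ᵐ r ∂P, r ∈ Set.Icc a b) (γ : ℝ)
    {x : ℝ} (hx : 0 < x) :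
    x * (1 / x - γ * ∫ r, r / (x * r + 1) ∂P)
      = (1 - γ) + γ * ∫ r, 1 / (x * r + 1) ∂P := by
  have h1 : x * ∫ r, r / (x * r + 1) ∂P = ∫ r, x * (r / (x * r + 1)) ∂P :=
    (integral_const_mul x _).symm
  have h2 : ∫ r, x * (r / (x * r + 1)) ∂P = ∫ r, (1 - 1 / (x * r + 1)) ∂P := by
    apply integral_congr_ae
    filter_upwards [hsupp] with r hr
    have hd : 0 < x * r + 1 := by nlinarith [hr.1]
    field_simp; ring
  have h3 : ∫ r, (1 - 1 / (x * r + 1)) ∂P = 1 - ∫ r, 1 / (x * r + 1) ∂P := by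
    rw [integral_sub (integrable_const 1) (rfp_int_one ha hsupp hx.le)]
    simp
  have hxne : x ≠ 0 := hx.ne'
  have h4 : x * (1 / x - γ * ∫ r, r / (x * r + 1) ∂P)
      = 1 - γ * (x * ∫ r, r / (x * r + 1) ∂P) := by
    field_simp
  rw [h4, h1, h2, h3]; ring

end RfpHelpers

/-- **Properties of the fixed-point function for the ridgeless risk.**
Let `0 < a ≤ b`, `P` a probability measure supported in `[a, b]`, `γ ∈ (1, ∞)`, and
`f(x) = 1/x − γ ∫ r/(x·r + 1) dP(r)` for `x ∈ (0, ∞)`. Then: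
(i) there is a unique `x₀ ∈ (0, ∞)` with `f x₀ = 0`;
(ii) `f` is strictly decreasing on `(0, x₀]`; and
(iii) `f(x) → +∞` as `x → 0⁺`. -/
theorem ridgeless_fixed_point_function_properties (a b : ℝ) (ha : 0 < a) (hab : a ≤ b)
    (P : Measure ℝ) [IsProbabilityMeasure P] (hsupp : ∀ᵐ r ∂P, r ∈ Set.Icc a b)
    (γ : ℝ) (hγ : 1 < γ)
    (f : ℝ → ℝ)
    (hf : ∀ x ∈ Set.Ioi (0 : ℝ), f x = 1 / x - γ * ∫ r, r / (x * r + 1) ∂P) :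
    (∃! x₀, x₀ ∈ Set.Ioi (0 : ℝ) ∧ f x₀ = 0) ∧
    (∀ x₀ ∈ Set.Ioi (0 : ℝ), f x₀ = 0 → StrictAntiOn f (Set.Ioc 0 x₀)) ∧
    Tendsto f (nhdsWithin 0 (Set.Ioi 0)) atTop := by
  have hb : 0 < b := lt_of_lt_of_le ha hab
  have hγ1 : 0 < γ - 1 := by linarith
  have hγ0 : 0 < γ := by linarith
  set I : ℝ → ℝ := fun x => ∫ r, 1 / (x * r + 1) ∂P with hI
  set g : ℝ → ℝ := fun x => (1 - γ) + γ * I x with hg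
  -- basic relation x * f x = g x
  have hrel : ∀ x : ℝ, 0 < x → x * f x = g x := by
    intro x hx
    rw [hf x hx]
    exact rfp_xf ha hsupp γ hx
  have hfg : ∀ x : ℝ, 0 < x → (f x = 0 ↔ g x = 0) := by
    intro x hx
    constructor
    · intro h; rw [← hrel x hx, h, mul_zero]
    · intro h
      have := hrel x hx
      rw [h] at this
      exact (mul_eq_zero.mp this).resolve_left hx.ne'
  -- g is strictly decreasing on nonnegative reals
  have hganti : ∀ x y : ℝ, 0 ≤ x → x < y → g y < g x := by
    intro x y hx hxy
    have := rfp_I_strict ha hab hsupp hx hxy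
    simp only [hg]
    have : γ * I y < γ * I x := by
      apply mul_lt_mul_of_pos_left _ hγ0
      exact this
    linarith
  -- choose endpoints for the IVT
  set lo : ℝ := 1 / (2 * (γ - 1) * b) with hlo_def
  set hi : ℝ := 2 / ((γ - 1) * a) with hhi_def
  have hlo : 0 < lo := by positivity
  have hhi : 0 < hi := by positivity
  have hlohi : lo ≤ hi := by
    rw [hlo_def, hhi_def, div_le_div_iff₀ (by positivity) (by positivity)]
    nlinarith
  -- g lo > 0
  have hglo : 0 < g lo := by
    have hlob : lo * b = 1 / (2 * (γ - 1)) := by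
      rw [hlo_def]; field_simp
    have hIlb : 1 / (lo * b + 1) ≤ I lo := rfp_I_lb ha hab hsupp hlo.le
    have e1 : lo * b + 1 = (2 * γ - 1) / (2 * (γ - 1)) := by
      rw [hlob]; field_simp; ring
    have e2 : (1:ℝ) / (lo * b + 1) = 2 * (γ - 1) / (2 * γ - 1) := by
      rw [e1, one_div_div]
    have key : γ - 1 < γ * (2 * (γ - 1) / (2 * γ - 1)) := by
      rw [← mul_div_assoc, lt_div_iff₀ (by linarith)]
      nlinarith
    have : γ - 1 < γ * I lo := by
      calc γ - 1 < γ * (2 * (γ - 1) / (2 * γ - 1)) := key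
        _ = γ * (1 / (lo * b + 1)) := by rw [e2]
        _ ≤ γ * I lo := mul_le_mul_of_nonneg_left hIlb hγ0.le
    simp only [hg]; linarith
  -- g hi < 0
  have hghi : g hi < 0 := by
    have hhia : hi * a = 2 / (γ - 1) := by
      rw [hhi_def]; field_simp
    have hIub : I hi ≤ 1 / (hi * a + 1) := rfp_I_ub ha hsupp hhi.le
    have e1 : hi * a + 1 = (γ + 1) / (γ - 1) := by
      rw [hhia]; field_simp; ring
    have e2 : (1:ℝ) / (hi * a + 1) = (γ - 1) / (γ + 1) := by
      rw [e1, one_div_div]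
    have key : γ * ((γ - 1) / (γ + 1)) < γ - 1 := by
      rw [← mul_div_assoc, div_lt_iff₀ (by linarith)]
      nlinarith
    have : γ * I hi < γ - 1 := by
      calc γ * I hi ≤ γ * (1 / (hi * a + 1)) := mul_le_mul_of_nonneg_left hIub hγ0.le
        _ = γ * ((γ - 1) / (γ + 1)) := by rw [e2]
        _ < γ - 1 := key
    simp only [hg]; linarith
  -- continuity of g on [lo, hi]
  have hgcont : ContinuousOn g (Set.Icc lo hi) := by
    have hIlip : LipschitzOnWith (Real.toNNReal b) I (Set.Icc lo hi) := by
      apply LipschitzOnWith.of_dist_le_mul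
      intro x hx y hy
      rw [Real.dist_eq, Real.dist_eq, Real.coe_toNNReal b hb.le]
      exact rfp_I_lip ha hab hsupp (le_trans hlo.le hx.1) (le_trans hlo.le hy.1)
    exact continuousOn_const.add (continuousOn_const.mul hIlip.continuousOn)
  -- existence of a root of g
  obtain ⟨x₀, hx₀mem, hgx₀⟩ :
      (0:ℝ) ∈ g '' Set.Icc lo hi := by
    apply intermediate_value_Icc' hlohi hgcont
    exact ⟨hghi.le, hglo.le⟩
  have hx₀pos : 0 < x₀ := lt_of_lt_of_le hlo hx₀mem.1
  have hfx₀ : f x₀ = 0 := (hfg x₀ hx₀pos).mpr hgx₀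
  -- uniqueness abstract helper
  have huniq : ∀ x : ℝ, 0 < x → g x = 0 → x = x₀ := by
    intro x hx hgx
    rcases lt_trichotomy x x₀ with h | h | h
    · exfalso; have := hganti x x₀ hx.le h; rw [hgx, hgx₀] at this; exact lt_irrefl 0 this
    · exact h
    · exfalso; have := hganti x₀ x hx₀pos.le h; rw [hgx, hgx₀] at this; exact lt_irrefl 0 this
  refine ⟨⟨x₀, ⟨hx₀pos, hfx₀⟩, ?_⟩, ?_, ?_⟩
  · rintro y ⟨hy, hfy⟩
    exact huniq y hy ((hfg y hy).mp hfy)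
  · -- strict anti on (0, x₁]
    rintro x₁ hx₁ hfx₁
    have hx₁pos : 0 < x₁ := hx₁
    have hgx₁ : g x₁ = 0 := (hfg x₁ hx₁pos).mp hfx₁
    intro x hx y hy hxy
    have hx0 : 0 < x := hx.1
    have hy0 : 0 < y := hy.1
    have hgy : 0 ≤ g y := by
      rcases lt_or_eq_of_le hy.2 with h | h
      · have := hganti y x₁ hy0.le h; rw [hgx₁] at this; linarith
      · rw [h, hgx₁]
    have hgxy : g y < g x := hganti x y hx0.le hxy
    have hfx : f x = g x / x := by
      rw [eq_div_iff hx0.ne', mul_comm]; exact hrel x hx0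
    have hfy : f y = g y / y := by
      rw [eq_div_iff hy0.ne', mul_comm]; exact hrel y hy0
    rw [hfx, hfy]
    calc g y / y ≤ g y / x := by
          rw [div_le_div_iff₀ hy0 hx0]
          nlinarith
      _ < g x / x := by
          rw [div_lt_div_iff₀ hx0 hx0]
          nlinarith
  · -- tendsto atTop
    have hbound : ∀ᶠ x in nhdsWithin (0:ℝ) (Set.Ioi 0), 1 / x - γ * b ≤ f x := by
      filter_upwards [self_mem_nhdsWithin] with x hx
      have hx0 : (0:ℝ) < x := hx
      rw [hf x hx]
      have := rfp_J_ub ha hsupp hx0.le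
      nlinarith
    apply tendsto_atTop_mono' _ hbound
    have h1 : Tendsto (fun x : ℝ => 1 / x) (nhdsWithin 0 (Set.Ioi 0)) atTop := by
      simpa [one_div] using tendsto_inv_nhdsGT_zero
    exact tendsto_atTop_add_const_right _ (-(γ * b)) h1 |>.congr (by intro x; ring)
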